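/- Let a, F : ℝ → ℝ be continuous with F compactly supported, and let v⁰(t) := ∫_{−∞}^{t} e^{−∫_s^t a(r) dr} F(s) ds. Define v¹(t) := ∫_{−∞}^{t} e^{−∫_s^t a(r) dr} v⁰(s) ds. Then v¹(t) = t·v⁰(t) − ∫_{−∞}^{t} s e^{−∫_s^t a(r) dr} F(s) ds for every t ∈ ℝ. -/
import Mathlib

open MeasureTheory intervalIntegral

lemma aux_parts (g : ℝ → ℝ) (hg : Continuous g) (hgs : HasCompactSupport g) (t : ℝ) :
    ∫ s in Set.Iic t, (∫ u in Set.Iic s, g u) =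
      t * (∫ u in Set.Iic t, g u) - ∫ s in Set.Iic t, s * g s := by
  obtain ⟨r, hr⟩ := hgs.isCompact.isBounded.subset_closedBall 0
  set c : ℝ := min (-r - 1) t with hc
  have hct : c ≤ t := min_le_right _ _
  have hg0 : ∀ x ≤ c, g x = 0 := by
    intro x hx
    apply image_eq_zero_of_notMem_tsupport
    intro hmem
    have h1 := hr hmem
    rw [Metric.mem_closedBall, Real.dist_eq, sub_zero] at h1
    have h2 : -r ≤ x := neg_le_of_abs_le h1
    have h3 : x ≤ -r - 1 := le_trans hx (min_le_left _ _)
    linarith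
  have hgint : Integrable g := hg.integrable_of_hasCompactSupport hgs
  have hsgint : Integrable (fun s => s * g s) :=
    (continuous_id.mul hg).integrable_of_hasCompactSupport (hgs.mul_left)
  set Gc : ℝ → ℝ := fun x => ∫ u in c..x, g u with hGc
  have hGder : ∀ x, HasDerivAt Gc (g x) x := fun x =>
    integral_hasDerivAt_right (hg.intervalIntegrable c x)
      (hg.stronglyMeasurableAtFilter volume _) hg.continuousAt
  have hGcont : Continuous Gc := by
    rw [continuous_iff_continuousAt]; exact fun x => (hGder x).continuousAt
  have hGc0 : ∀ x ≤ c, Gc x = 0 := by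
    intro x hx
    have : Set.EqOn g 0 (Set.uIcc c x) := by
      intro y hy
      exact hg0 y (le_trans hy.2 (max_le le_rfl hx))
    simp [hGc, intervalIntegral.integral_congr this]
  have key : ∀ f : ℝ → ℝ, IntegrableOn f (Set.Iic t) → (∀ x ≤ c, f x = 0) →
      (∫ x in Set.Iic t, f x) = ∫ x in c..t, f x := by
    intro f hint h0
    have h1 : IntegrableOn f (Set.Iic c) := hint.mono_set (Set.Iic_subset_Iic.mpr hct)
    have h2 : (∫ x in Set.Iic c, f x) = 0 := by
      rw [MeasureTheory.setIntegral_congr_fun measurableSet_Iic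
        (fun x hx => h0 x hx : Set.EqOn f 0 (Set.Iic c))]
      simp
    have h3 := intervalIntegral.integral_Iic_sub_Iic h1 hint
    rw [h2, sub_zero] at h3
    exact h3
  have hGIic : ∀ x, (∫ u in Set.Iic x, g u) = Gc x := by
    intro x
    have h2 : (∫ u in Set.Iic c, g u) = 0 := by
      rw [MeasureTheory.setIntegral_congr_fun measurableSet_Iic
        (fun y hy => hg0 y hy : Set.EqOn g 0 (Set.Iic c))]
      simp
    have h3 := intervalIntegral.integral_Iic_sub_Iic (hgint.integrableOn) (hgint.integrableOn)
      (a := c) (b := x)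
    rw [h2, sub_zero] at h3
    exact h3
  have hGintOn : IntegrableOn Gc (Set.Iic t) := by
    have h1 : IntegrableOn Gc (Set.Iic c) :=
      (integrableOn_zero).congr_fun (fun x hx => (hGc0 x hx).symm) measurableSet_Iic
    have h2 : IntegrableOn Gc (Set.Icc c t) := hGcont.integrableOn_Icc
    exact (h1.union h2).mono_set (by
      intro x hx
      rcases le_total x c with h | h
      · exact Or.inl h
      · exact Or.inr ⟨h, hx⟩)
  have parts := intervalIntegral.integral_mul_deriv_eq_deriv_mul (a := c) (b := t)
    (u := Gc) (v := id) (u' := g) (v' := fun _ => 1)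
    (fun x _ => hGder x) (fun x _ => hasDerivAt_id x)
    (hg.intervalIntegrable c t) intervalIntegrable_const
  simp only [id, mul_one] at parts
  have hGcc : Gc c = 0 := by simp [hGc]
  simp only [hGIic]
  rw [key _ hGintOn hGc0, key _ hsgint.integrableOn (fun x hx => by rw [hg0 x hx, mul_zero]),
    parts, hGcc]
  have : (∫ x in c..t, g x * x) = ∫ x in c..t, x * g x := by
    congr 1; ext x; ring
  rw [this]; ring

theorem first_moment_relation (a F : ℝ → ℝ) (ha : Continuous a) (hF : Continuous F)
    (hsupp : HasCompactSupport F)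
    (v0 v1 : ℝ → ℝ)
    (hv0 : ∀ t : ℝ, v0 t = ∫ s in Set.Iic t, Real.exp (-(∫ r in s..t, a r)) * F s)
    (hv1 : ∀ t : ℝ, v1 t = ∫ s in Set.Iic t, Real.exp (-(∫ r in s..t, a r)) * v0 s) :
    ∀ t : ℝ,
      v1 t = t * v0 t - ∫ s in Set.Iic t, s * Real.exp (-(∫ r in s..t, a r)) * F s := by
  intro t
  set A : ℝ → ℝ := fun x => ∫ r in (0:ℝ)..x, a r with hA
  have key2 : ∀ u v : ℝ, (∫ r in u..v, a r) = A v - A u := by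
    intro u v
    rw [← intervalIntegral.integral_interval_sub_left (ha.intervalIntegrable 0 v)
      (ha.intervalIntegrable 0 u)]
  have hAcont : Continuous A := by
    rw [continuous_iff_continuousAt]
    intro x
    exact (integral_hasDerivAt_right (ha.intervalIntegrable 0 x)
      (ha.stronglyMeasurableAtFilter volume _) ha.continuousAt).continuousAt
  set g : ℝ → ℝ := fun s => Real.exp (A s) * F s with hg
  have hgc : Continuous g := (Real.continuous_exp.comp hAcont).mul hF
  have hgsupp : HasCompactSupport g := hsupp.mul_left
  have hv0' : ∀ x : ℝ, v0 x = Real.exp (-A x) * ∫ s in Set.Iic x, g s := by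
    intro x
    rw [hv0 x, ← MeasureTheory.integral_const_mul]
    congr 1
    ext s
    rw [key2 s x, show -(A x - A s) = -A x + A s by ring, Real.exp_add, hg]
    ring
  have hv1' : v1 t = Real.exp (-A t) * ∫ s in Set.Iic t, (∫ u in Set.Iic s, g u) := by
    rw [hv1 t, ← MeasureTheory.integral_const_mul]
    congr 1
    ext s
    rw [hv0' s, key2 s t, show -(A t - A s) = (-A t + A s) by ring, Real.exp_add,
      show Real.exp (-A t) * Real.exp (A s) * (Real.exp (-A s) * ∫ u in Set.Iic s, g u)
        = (Real.exp (A s) * Real.exp (-A s)) * (Real.exp (-A t) * ∫ u in Set.Iic s, g u) by ring,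
      ← Real.exp_add, show A s + -A s = 0 by ring, Real.exp_zero, one_mul]
  have hRHS : (∫ s in Set.Iic t, s * Real.exp (-(∫ r in s..t, a r)) * F s)
      = Real.exp (-A t) * ∫ s in Set.Iic t, s * g s := by
    rw [← MeasureTheory.integral_const_mul]
    congr 1
    ext s
    rw [key2 s t, show -(A t - A s) = -A t + A s by ring, Real.exp_add, hg]
    ring
  rw [hv1', hv0' t, hRHS, aux_parts g hgc hgsupp t]
  ring
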